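/- (Corollary 2.6, symmetric identity for ordinary Genocchi polynomials) Let a and b be odd positive integers, let x be a real number, and let m be a positive integer. Then ∑_{i=0}^{m} C(m,i) · a^{i-1} · b^{m-i} · G_i(bx) · S_{m-i}(a) = ∑_{i=0}^{m} C(m,i) · b^{i-1} · a^{m-i} · G_i(ax) · S_{m-i}(b), where C(m,i) denotes the binomial coefficient. (In the terms i = 0 the Genocchi factor vanishes since G_0(x) = 0, so the rational factors a^{-1}, b^{-1} are harmless.) -/

import Mathlib

/-- The ordinary Genocchi polynomial, `G_n(x) = 2^n (B_n((x+1)/2) - B_n(x/2))`,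
equivalent to the generating function `2t·e^{xt}/(e^t+1) = ∑ G_n(x) tⁿ/n!`. -/
noncomputable def genocchiPoly (n : ℕ) (x : ℝ) : ℝ :=
  2 ^ n * (Polynomial.aeval ((x + 1) / 2) (Polynomial.bernoulli n) -
    Polynomial.aeval (x / 2) (Polynomial.bernoulli n))

/-- The alternating power sum `S_m(a) = ∑_{j=0}^{a-1} (-1)^j j^m` (with `0^0 = 1`). -/
noncomputable def altPowSum (m a : ℕ) : ℝ :=
  ∑ j ∈ Finset.range a, (-1 : ℝ) ^ j * (j : ℝ) ^ m

open PowerSeries Finset Nat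

namespace Stmt9Aux

/-- EGF of Genocchi polynomials. -/
noncomputable def Gs (y : ℝ) : ℝ⟦X⟧ := PowerSeries.mk fun n => genocchiPoly n y / n !

/-- EGF of `k ↦ b^k S_k(a)`. -/
noncomputable def Qs (b a : ℕ) : ℝ⟦X⟧ :=
  PowerSeries.mk fun k => (b : ℝ) ^ k * altPowSum k a / k !

lemma Gs_eq (y : ℝ) :
    Gs y = rescale (2:ℝ) (PowerSeries.mk fun n =>
        Polynomial.aeval ((y+1)/2) ((1 / n ! : ℚ) • Polynomial.bernoulli n))
      - rescale (2:ℝ) (PowerSeries.mk fun n =>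
        Polynomial.aeval (y/2) ((1 / n ! : ℚ) • Polynomial.bernoulli n)) := by
  ext n
  have hn : ((n ! : ℝ)) ≠ 0 := Nat.cast_ne_zero.mpr n.factorial_ne_zero
  simp only [Gs, map_sub, coeff_rescale, coeff_mk, map_smul, genocchiPoly,
    Rat.smul_def, Rat.cast_div, Rat.cast_one, Rat.cast_natCast]
  field_simp

lemma exp_sub_one_ne : (exp ℝ - 1) ≠ 0 := by
  intro h
  have := congrArg (PowerSeries.coeff 1) h
  simp [coeff_exp, PowerSeries.coeff_one] at this

/-- The Genocchi generating function relation `(∑ Gₙ(y) Xⁿ/n!) (e^X + 1) = 2 X e^{yX}`. -/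
lemma Gs_mul (y : ℝ) : Gs y * (exp ℝ + 1) = 2 * (X * rescale y (exp ℝ)) := by
  have h1 := congrArg (rescale (2:ℝ))
    (Polynomial.bernoulli_generating_function (A := ℝ) ((y+1)/2))
  have h2 := congrArg (rescale (2:ℝ))
    (Polynomial.bernoulli_generating_function (A := ℝ) (y/2))
  simp only [map_mul, map_sub, map_one, rescale_X, rescale_rescale] at h1 h2
  rw [show (y+1)/2*2 = y + 1 by ring] at h1
  rw [show y/2*2 = y by ring] at h2
  have he2 : rescale (2:ℝ) (exp ℝ) = exp ℝ * exp ℝ := by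
    have := exp_mul_exp_eq_exp_add (1:ℝ) 1
    norm_num [rescale_one] at this
    rw [this]
  have hy1 : rescale (y+1) (exp ℝ) = rescale y (exp ℝ) * exp ℝ := by
    have := exp_mul_exp_eq_exp_add (y:ℝ) 1
    rw [rescale_one] at this
    rw [← this]
    rfl
  rw [he2] at h1 h2
  rw [Gs_eq]
  apply mul_right_cancel₀ exp_sub_one_ne
  have hC2 : PowerSeries.C (2:ℝ) = (2 : ℝ⟦X⟧) := by
    exact map_ofNat _ 2
  calc (rescale (2:ℝ) (PowerSeries.mk fun n =>
        Polynomial.aeval ((y+1)/2) ((1 / n ! : ℚ) • Polynomial.bernoulli n))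
      - rescale (2:ℝ) (PowerSeries.mk fun n =>
        Polynomial.aeval (y/2) ((1 / n ! : ℚ) • Polynomial.bernoulli n))) * (exp ℝ + 1) * (exp ℝ - 1)
      = (rescale (2:ℝ) (PowerSeries.mk fun n =>
        Polynomial.aeval ((y+1)/2) ((1 / n ! : ℚ) • Polynomial.bernoulli n)) * (exp ℝ * exp ℝ - 1))
      - (rescale (2:ℝ) (PowerSeries.mk fun n =>
        Polynomial.aeval (y/2) ((1 / n ! : ℚ) • Polynomial.bernoulli n)) * (exp ℝ * exp ℝ - 1)) := by
        ring
    _ = PowerSeries.C 2 * X * rescale (y+1) (exp ℝ) - PowerSeries.C 2 * X * rescale y (exp ℝ) := by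
        rw [h1, h2]
    _ = 2 * (X * rescale y (exp ℝ)) * (exp ℝ - 1) := by
        rw [hy1, hC2]; ring

lemma Qs_eq (b a : ℕ) : Qs b a
    = ∑ j ∈ range a, PowerSeries.C ((-1:ℝ)^j) * rescale ((b:ℝ)*j) (exp ℝ) := by
  ext k
  simp only [Qs, coeff_mk, map_sum, PowerSeries.coeff_C_mul, coeff_rescale, coeff_exp,
    altPowSum, Finset.sum_div, Finset.mul_sum]
  refine Finset.sum_congr rfl fun j _ => ?_
  have hk : ((k ! : ℝ)) ≠ 0 := Nat.cast_ne_zero.mpr k.factorial_ne_zero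
  rw [eq_ratCast, Rat.cast_div, Rat.cast_one, Rat.cast_natCast]
  field_simp
  ring

/-- Alternating telescope: `(∑ b^k S_k(a) X^k/k!) (e^{bX} + 1) = e^{abX} + 1` for odd `a`. -/
lemma Qs_mul (b a : ℕ) (hao : Odd a) :
    Qs b a * (rescale (b:ℝ) (exp ℝ) + 1) = rescale ((b:ℝ)*a) (exp ℝ) + 1 := by
  set f : ℕ → ℝ⟦X⟧ := fun j => -(PowerSeries.C ((-1:ℝ)^j) * rescale ((b:ℝ)*j) (exp ℝ)) with hf
  have step : ∀ (j : ℕ), (PowerSeries.C ((-1:ℝ)^j) * rescale ((b:ℝ)*j) (exp ℝ))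
      * (rescale (b:ℝ) (exp ℝ) + 1) = f (j+1) - f j := by
    intro (j : ℕ)
    have hmul : rescale ((b:ℝ)*j) (exp ℝ) * rescale (b:ℝ) (exp ℝ)
        = rescale ((b:ℝ)*(j+1:ℕ)) (exp ℝ) := by
      rw [exp_mul_exp_eq_exp_add]
      norm_num [mul_add]
    simp only [hf, pow_succ]
    rw [mul_add, mul_assoc, hmul]
    simp only [map_mul, map_neg, map_one]
    ring
  rw [Qs_eq, Finset.sum_mul]
  rw [Finset.sum_congr rfl fun j _ => step j, Finset.sum_range_sub f]
  have h0 : f 0 = -1 := by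
    simp [hf]
  have ha' : f a = rescale ((b:ℝ)*a) (exp ℝ) := by
    simp [hf, hao.neg_one_pow]
  rw [h0, ha']
  ring

lemma constCoeff_rescale_exp (c : ℝ) : constantCoeff (rescale c (exp ℝ)) = 1 := by
  rw [← coeff_zero_eq_constantCoeff_apply, coeff_rescale, coeff_exp]
  norm_num

/-- The key symmetry. -/
lemma key (a b : ℕ) (hao : Odd a) (hbo : Odd b) (x : ℝ) :
    PowerSeries.C (b:ℝ) * (rescale (a:ℝ) (Gs ((b:ℝ)*x)) * Qs b a)
      = PowerSeries.C (a:ℝ) * (rescale (b:ℝ) (Gs ((a:ℝ)*x)) * Qs a b) := by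
  set U : ℝ⟦X⟧ := (rescale (a:ℝ) (exp ℝ) + 1) * (rescale (b:ℝ) (exp ℝ) + 1) with hU
  have hUne : U ≠ 0 := by
    intro h
    have := congrArg (constantCoeff (R := ℝ)) h
    simp [hU, map_mul, map_add, map_one, constCoeff_rescale_exp] at this
  apply mul_right_cancel₀ hUne
  have hA := congrArg (rescale (a:ℝ)) (Gs_mul ((b:ℝ)*x))
  have hB := congrArg (rescale (b:ℝ)) (Gs_mul ((a:ℝ)*x))
  simp only [map_mul, map_add, map_one, map_ofNat, rescale_X, rescale_rescale] at hA hB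
  rw [show (b:ℝ)*x*a = (a:ℝ)*((b:ℝ)*x) by ring] at hA
  rw [show (a:ℝ)*x*b = (a:ℝ)*((b:ℝ)*x) by ring] at hB
  have hQa := Qs_mul b a hao
  have hQb := Qs_mul a b hbo
  rw [show (a:ℝ)*(b:ℕ) = (b:ℝ)*(a:ℕ) by push_cast; ring] at hQb
  calc PowerSeries.C (b:ℝ) * (rescale (a:ℝ) (Gs ((b:ℝ)*x)) * Qs b a) * U
      = PowerSeries.C (b:ℝ) * ((rescale (a:ℝ) (Gs ((b:ℝ)*x)) * (rescale (a:ℝ) (exp ℝ) + 1))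
        * (Qs b a * (rescale (b:ℝ) (exp ℝ) + 1))) := by rw [hU]; ring
    _ = PowerSeries.C (b:ℝ) * ((2 * (PowerSeries.C (a:ℝ) * X
          * rescale ((a:ℝ)*((b:ℝ)*x)) (exp ℝ)))
        * (rescale ((b:ℝ)*(a:ℕ)) (exp ℝ) + 1)) := by rw [hA, hQa]
    _ = PowerSeries.C (a:ℝ) * ((2 * (PowerSeries.C (b:ℝ) * X
          * rescale ((a:ℝ)*((b:ℝ)*x)) (exp ℝ)))
        * (rescale ((b:ℝ)*(a:ℕ)) (exp ℝ) + 1)) := by ring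
    _ = PowerSeries.C (a:ℝ) * ((rescale (b:ℝ) (Gs ((a:ℝ)*x)) * (rescale (b:ℝ) (exp ℝ) + 1))
        * (Qs a b * (rescale (a:ℝ) (exp ℝ) + 1))) := by rw [hB, hQb]
    _ = PowerSeries.C (a:ℝ) * (rescale (b:ℝ) (Gs ((a:ℝ)*x)) * Qs a b) * U := by rw [hU]; ring

end Stmt9Aux

open Stmt9Aux in
theorem stmt9 (a b : ℕ) (ha : 0 < a) (hb : 0 < b) (hao : Odd a) (hbo : Odd b)
    (x : ℝ) (m : ℕ) (hm : 0 < m) :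
    ∑ i ∈ Finset.range (m + 1), (m.choose i : ℝ) * (a : ℝ) ^ ((i : ℤ) - 1) *
        (b : ℝ) ^ (m - i) * genocchiPoly i ((b : ℝ) * x) * altPowSum (m - i) a =
      ∑ i ∈ Finset.range (m + 1), (m.choose i : ℝ) * (b : ℝ) ^ ((i : ℤ) - 1) *
        (a : ℝ) ^ (m - i) * genocchiPoly i ((a : ℝ) * x) * altPowSum (m - i) b := by
  have ha0 : ((a : ℝ)) ≠ 0 := Nat.cast_ne_zero.mpr ha.ne'
  have hb0 : ((b : ℝ)) ≠ 0 := Nat.cast_ne_zero.mpr hb.ne'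
  have expand : ∀ (c d : ℕ), (c : ℝ) ≠ 0 → (d : ℝ) ≠ 0 →
      ∑ i ∈ Finset.range (m + 1), (m.choose i : ℝ) * (c : ℝ) ^ ((i : ℤ) - 1) *
        (d : ℝ) ^ (m - i) * genocchiPoly i ((d : ℝ) * x) * altPowSum (m - i) c
      = (m ! : ℝ) / ((c : ℝ) * d) * PowerSeries.coeff m
          (PowerSeries.C (d:ℝ) * (PowerSeries.rescale (c:ℝ) (Gs ((d:ℝ)*x)) * Qs d c)) := by
    intro c d hc0 hd0
    rw [PowerSeries.coeff_C_mul, PowerSeries.coeff_mul,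
      Finset.Nat.sum_antidiagonal_eq_sum_range_succ_mk]
    simp only [PowerSeries.coeff_rescale, Gs, Qs, PowerSeries.coeff_mk]
    rw [Finset.mul_sum, Finset.mul_sum]
    refine Finset.sum_congr rfl fun i hi => ?_
    have him : i ≤ m := Nat.lt_succ_iff.mp (Finset.mem_range.mp hi)
    have hcast : (m.choose i : ℝ) = (m ! : ℝ) / ((i ! : ℝ) * ((m - i)! : ℝ)) :=
      Nat.cast_choose ℝ him
    have hi0 : ((i ! : ℝ)) ≠ 0 := Nat.cast_ne_zero.mpr i.factorial_ne_zero
    have hmi0 : (((m - i)! : ℝ)) ≠ 0 := Nat.cast_ne_zero.mpr (m - i).factorial_ne_zero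
    rw [hcast, zpow_sub₀ hc0, zpow_natCast, zpow_one]
    field_simp
  rw [expand a b ha0 hb0, expand b a hb0 ha0, key a b hao hbo x,
    show (b:ℝ) * a = (a:ℝ) * b by ring]
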